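/- Let y_F be the uniform circular chain of N atoms with nearest-neighbor spacing Fε. Then for every u ∈ 𝒰, δ²E^CB(y_F)[u,u] ≥ min{ φ''(F) + 4 φ''(2F), (φ'(F) + 2 φ'(2F))/F } ‖u'‖²_{ℓ²_ε}. Moreover, for C > 0 the radial expansion ũ ∈ 𝒰 given by ũ_ℓ = C y_{F,ℓ} satisfies δ²E^CB(y_F)[ũ,ũ] = (φ''(F) + 4 φ''(2F)) ‖ũ'‖²_{ℓ²_ε}, and if N is even the zig-zag û ∈ 𝒰 given by û_ℓ = (−1)^ℓ C y_{F,ℓ} satisfies δ²E^CB(y_F)[û,û] = ((φ'(F) + 2 φ'(2F))/F) ‖û'‖²_{ℓ²_ε}. -/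

import Mathlib

noncomputable section

open Real Finset

/-- Euclidean norm on `ℝ × ℝ`. -/
def enorm2 (v : ℝ × ℝ) : ℝ := Real.sqrt (v.1 ^ 2 + v.2 ^ 2)

/-- Euclidean dot product on `ℝ × ℝ`. -/
def edot (v w : ℝ × ℝ) : ℝ := v.1 * w.1 + v.2 * w.2

/-- `N`-periodic mean-zero displacements (the space `𝒰`). -/
def IsDisp (N : ℕ) (u : ℤ → ℝ × ℝ) : Prop :=
  (∀ ℓ : ℤ, u (ℓ + (N : ℤ)) = u ℓ) ∧ ∑ ℓ ∈ Finset.Icc (1 : ℤ) (N : ℤ), u ℓ = 0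

/-- Constrained displacements (the space `𝒰̃`): second component vanishes. -/
def IsDisp1D (N : ℕ) (u : ℤ → ℝ × ℝ) : Prop :=
  IsDisp N u ∧ ∀ ℓ : ℤ, (u ℓ).2 = 0

/-- Backward difference `u'_ℓ = (u_ℓ - u_{ℓ-1})/ε`. -/
def bd (ε : ℝ) (u : ℤ → ℝ × ℝ) (ℓ : ℤ) : ℝ × ℝ := ε⁻¹ • (u ℓ - u (ℓ - 1))

/-- The inner product `⟨v,w⟩ = ε ∑_{ℓ=1}^N v_ℓ · w_ℓ`. -/
def ip (N : ℕ) (ε : ℝ) (v w : ℤ → ℝ × ℝ) : ℝ :=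
  ε * ∑ ℓ ∈ Finset.Icc (1 : ℤ) (N : ℤ), edot (v ℓ) (w ℓ)

/-- The norm `‖v‖_{ℓ²_ε}`. -/
def nrm (N : ℕ) (ε : ℝ) (v : ℤ → ℝ × ℝ) : ℝ :=
  Real.sqrt (ε * ∑ ℓ ∈ Finset.Icc (1 : ℤ) (N : ℤ), (enorm2 (v ℓ)) ^ 2)

/-- The atomistic energy `E^a`. -/
def Ea (N : ℕ) (ε : ℝ) (φ : ℝ → ℝ) (y : ℤ → ℝ × ℝ) : ℝ :=
  ε * ∑ ℓ ∈ Finset.Icc (1 : ℤ) (N : ℤ),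
    (φ (enorm2 (bd ε y ℓ)) + φ (enorm2 (bd ε y (ℓ + 1) + bd ε y ℓ)))

/-- The Cauchy–Born energy `E^CB`. -/
def ECB (N : ℕ) (ε : ℝ) (φ : ℝ → ℝ) (y : ℤ → ℝ × ℝ) : ℝ :=
  ε * ∑ ℓ ∈ Finset.Icc (1 : ℤ) (N : ℤ),
    (φ (enorm2 (bd ε y ℓ)) + φ (2 * enorm2 (bd ε y ℓ)))

/-- The bond-angle energy `E^b`. -/
def Eb (N : ℕ) (ε α : ℝ) (y : ℤ → ℝ × ℝ) : ℝ :=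
  ε * ∑ ℓ ∈ Finset.Icc (1 : ℤ) (N : ℤ),
    α * (1 - edot (bd ε y (ℓ + 1)) (bd ε y ℓ) /
      (enorm2 (bd ε y (ℓ + 1)) * enorm2 (bd ε y ℓ)))

/-- The quasi-nonlocal energy `E^QNL`. -/
def EQNL (N K : ℕ) (ε : ℝ) (φ : ℝ → ℝ) (y : ℤ → ℝ × ℝ) : ℝ :=
  ε * ∑ ℓ ∈ Finset.Icc (1 : ℤ) (N : ℤ), φ (enorm2 (bd ε y ℓ))
  + ε * ∑ ℓ ∈ Finset.Icc (1 : ℤ) (K : ℤ), φ (enorm2 (bd ε y (ℓ + 1) + bd ε y ℓ))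
  + ε * ∑ ℓ ∈ Finset.Icc ((K : ℤ) + 2) (N : ℤ), φ (2 * enorm2 (bd ε y ℓ))
  + ε / 2 * φ (2 * enorm2 (bd ε y 1)) + ε / 2 * φ (2 * enorm2 (bd ε y ((K : ℤ) + 1)))

/-- First variation `δE(y)[u] = (d/dt) E(y + t u) |_{t=0}`. -/
def dE (E : (ℤ → ℝ × ℝ) → ℝ) (y u : ℤ → ℝ × ℝ) : ℝ :=
  deriv (fun t : ℝ => E (fun ℓ => y ℓ + t • u ℓ)) 0

/-- Second variation `δ²E(y)[u,v] = (∂²/∂t∂s) E(y + t u + s v) |_{t=s=0}`. -/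
def d2E (E : (ℤ → ℝ × ℝ) → ℝ) (y u v : ℤ → ℝ × ℝ) : ℝ :=
  deriv (fun s : ℝ => deriv (fun t : ℝ => E (fun ℓ => y ℓ + t • u ℓ + s • v ℓ)) 0) 0

/-- The linear chain `y_{F,ℓ} = (Fεℓ, 0)`. -/
def yLin (ε F : ℝ) : ℤ → ℝ × ℝ := fun ℓ => (F * ε * ℓ, 0)

/-- The uniform circular chain of radius `R = Fε/(2 sin(πε))`. -/
def yCirc (ε F : ℝ) : ℤ → ℝ × ℝ := fun ℓ =>
  (F * ε / (2 * Real.sin (π * ε)) * Real.cos (2 * π * ε * ℓ),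
   F * ε / (2 * Real.sin (π * ε)) * Real.sin (2 * π * ε * ℓ))



lemma sum_zpow_zero (N : ℕ) (hN : 1 ≤ N) (w : ℂ) (hw1 : w ≠ 1) (hwN : w ^ (N : ℕ) = 1) :
    ∑ ℓ ∈ Finset.Icc (1 : ℤ) (N : ℤ), w ^ ℓ = 0 := by
  have hw0 : w ≠ 0 := by
    intro h; rw [h, zero_pow (by omega)] at hwN; exact zero_ne_one hwN
  have : ∑ ℓ ∈ Finset.Icc (1 : ℤ) (N : ℤ), w ^ ℓ = ∑ k ∈ Finset.range N, w * w ^ (k : ℕ) := by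
    refine Finset.sum_nbij' (i := fun ℓ => (ℓ - 1).toNat) (j := fun k => (k : ℤ) + 1)
      ?_ ?_ ?_ ?_ ?_
    · intro ℓ hℓ; simp only [Finset.mem_Icc] at hℓ; simp only [Finset.mem_range]; omega
    · intro k hk; simp only [Finset.mem_range] at hk; simp only [Finset.mem_Icc]; omega
    · intro ℓ hℓ; simp only [Finset.mem_Icc] at hℓ; omega
    · intro k hk; simp only [Finset.mem_range] at hk; omega
    · intro ℓ hℓ; simp only [Finset.mem_Icc] at hℓ
      rw [← zpow_natCast, Int.toNat_of_nonneg (by omega)]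
      rw [show ℓ = 1 + (ℓ - 1) by ring, zpow_add₀ hw0]
      simp
  rw [this, ← Finset.mul_sum, geom_sum_eq hw1, hwN]
  simp

section circ
variable (N : ℕ) (hN : 4 ≤ N)

lemma w_pow (ℓ : ℤ) : (Complex.exp ((2*π*(N:ℝ)⁻¹ : ℝ) * Complex.I)) ^ ℓ
    = Complex.exp (((2*π*(N:ℝ)⁻¹*ℓ : ℝ)) * Complex.I) := by
  rw [← Complex.exp_int_mul]; congr 1; push_cast; ring

lemma w_pow_N (hN : 4 ≤ N) : (Complex.exp ((2*π*(N:ℝ)⁻¹ : ℝ) * Complex.I)) ^ (N : ℕ) = 1 := by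
  have hN0 : (N:ℝ) ≠ 0 := by positivity
  rw [← Complex.exp_nat_mul]
  have : (N:ℂ) * (((2*π*(N:ℝ)⁻¹ : ℝ)) * Complex.I) = 2*π*Complex.I := by
    push_cast
    have : (N:ℂ) ≠ 0 := by exact_mod_cast hN0
    field_simp
  rw [this, Complex.exp_two_pi_mul_I]

lemma w_ne_one (hN : 4 ≤ N) : (Complex.exp ((2*π*(N:ℝ)⁻¹ : ℝ) * Complex.I)) ≠ 1 := by
  rw [Ne, Complex.exp_eq_one_iff]
  rintro ⟨n, hn⟩
  have him := congrArg Complex.im hn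
  simp [Complex.mul_im, Complex.mul_re] at him
  have hπ : (0:ℝ) < π := Real.pi_pos
  have h1 : (2*π*(N:ℝ)⁻¹) = (n:ℝ) * (2*π) := by linarith [him]
  have hNpos : (0:ℝ) < N := by positivity
  have : (N:ℝ)⁻¹ = (n:ℝ) := by
    field_simp at h1 ⊢
    nlinarith
  have h2 : (0:ℝ) < (N:ℝ)⁻¹ := by positivity
  have h3 : (N:ℝ)⁻¹ < 1 := by
    rw [inv_lt_one_iff₀]; right; exact_mod_cast by omega
  rw [this] at h2 h3
  have : 0 < n := by exact_mod_cast h2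
  have : (1:ℝ) ≤ (n:ℝ) := by exact_mod_cast this
  linarith

lemma w_ne_neg_one (hN : 4 ≤ N) : (Complex.exp ((2*π*(N:ℝ)⁻¹ : ℝ) * Complex.I)) ≠ -1 := by
  intro h
  have h2 : (Complex.exp ((2*π*(N:ℝ)⁻¹ : ℝ) * Complex.I))^(2:ℤ) = 1 := by
    rw [h]; norm_num
  rw [w_pow] at h2
  rw [Complex.exp_eq_one_iff] at h2
  obtain ⟨n, hn⟩ := h2
  have him := congrArg Complex.im hn
  simp [Complex.mul_im, Complex.mul_re] at him
  have hπ : (0:ℝ) < π := Real.pi_pos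
  have hNpos : (0:ℝ) < N := by positivity
  have h1 : 2*(N:ℝ)⁻¹ = (n:ℝ) := by
    have : 2*π*(N:ℝ)⁻¹*2 = (n:ℝ)*(2*π) := by linarith [him]
    nlinarith
  have h2 : (0:ℝ) < 2*(N:ℝ)⁻¹ := by positivity
  have hx : (N:ℝ)⁻¹ * N = 1 := inv_mul_cancel₀ (by positivity)
  have hN4 : (4:ℝ) ≤ (N:ℝ) := by exact_mod_cast hN
  have h3 : 2*(N:ℝ)⁻¹ < 1 := by nlinarith
  rw [h1] at h2 h3
  have : 0 < n := by exact_mod_cast h2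
  have : (1:ℝ) ≤ (n:ℝ) := by exact_mod_cast this
  linarith

end circ

section sums
variable (N : ℕ)

lemma sum_cos_zero (hN : 4 ≤ N) :
    ∑ ℓ ∈ Finset.Icc (1 : ℤ) (N : ℤ), Real.cos (2*π*(N:ℝ)⁻¹*ℓ) = 0 := by
  have h := sum_zpow_zero N (by omega) _ (w_ne_one N hN) (w_pow_N N hN)
  calc ∑ ℓ ∈ Finset.Icc (1 : ℤ) (N : ℤ), Real.cos (2*π*(N:ℝ)⁻¹*ℓ)
      = ∑ ℓ ∈ Finset.Icc (1 : ℤ) (N : ℤ),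
        ((Complex.exp ((2*π*(N:ℝ)⁻¹ : ℝ) * Complex.I)) ^ ℓ).re :=
        Finset.sum_congr rfl (fun ℓ _ => by rw [w_pow, Complex.exp_ofReal_mul_I_re])
    _ = 0 := by rw [← Complex.re_sum, h]; rfl

lemma sum_sin_zero (hN : 4 ≤ N) :
    ∑ ℓ ∈ Finset.Icc (1 : ℤ) (N : ℤ), Real.sin (2*π*(N:ℝ)⁻¹*ℓ) = 0 := by
  have h := sum_zpow_zero N (by omega) _ (w_ne_one N hN) (w_pow_N N hN)
  calc ∑ ℓ ∈ Finset.Icc (1 : ℤ) (N : ℤ), Real.sin (2*π*(N:ℝ)⁻¹*ℓ)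
      = ∑ ℓ ∈ Finset.Icc (1 : ℤ) (N : ℤ),
        ((Complex.exp ((2*π*(N:ℝ)⁻¹ : ℝ) * Complex.I)) ^ ℓ).im :=
        Finset.sum_congr rfl (fun ℓ _ => by rw [w_pow, Complex.exp_ofReal_mul_I_im])
    _ = 0 := by rw [← Complex.im_sum, h]; rfl

lemma neg_w_pow_N (hN : 4 ≤ N) (hE : Even N) :
    (-(Complex.exp ((2*π*(N:ℝ)⁻¹ : ℝ) * Complex.I))) ^ (N : ℕ) = 1 := by
  rw [hE.neg_pow, w_pow_N N hN]

lemma neg_w_ne_one (hN : 4 ≤ N) :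
    (-(Complex.exp ((2*π*(N:ℝ)⁻¹ : ℝ) * Complex.I))) ≠ 1 := by
  intro h
  exact w_ne_neg_one N hN (by linear_combination -h)

lemma neg_w_zpow (ℓ : ℤ) : (-(Complex.exp ((2*π*(N:ℝ)⁻¹ : ℝ) * Complex.I))) ^ ℓ
    = (((-1:ℝ)^ℓ : ℝ) : ℂ) * (Complex.exp ((2*π*(N:ℝ)⁻¹ : ℝ) * Complex.I)) ^ ℓ := by
  rw [show (-(Complex.exp ((2*π*(N:ℝ)⁻¹ : ℝ) * Complex.I))) =
    (-1) * Complex.exp ((2*π*(N:ℝ)⁻¹ : ℝ) * Complex.I) by ring, mul_zpow,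
    Complex.ofReal_zpow]
  norm_num

lemma sum_neg_cos_zero (hN : 4 ≤ N) (hE : Even N) :
    ∑ ℓ ∈ Finset.Icc (1 : ℤ) (N : ℤ), (-1:ℝ)^ℓ * Real.cos (2*π*(N:ℝ)⁻¹*ℓ) = 0 := by
  have h := sum_zpow_zero N (by omega) _ (neg_w_ne_one N hN) (neg_w_pow_N N hN hE)
  calc ∑ ℓ ∈ Finset.Icc (1 : ℤ) (N : ℤ), (-1:ℝ)^ℓ * Real.cos (2*π*(N:ℝ)⁻¹*ℓ)
      = ∑ ℓ ∈ Finset.Icc (1 : ℤ) (N : ℤ),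
        ((-(Complex.exp ((2*π*(N:ℝ)⁻¹ : ℝ) * Complex.I))) ^ ℓ).re :=
        Finset.sum_congr rfl (fun ℓ _ => by
          rw [neg_w_zpow, w_pow, Complex.re_ofReal_mul, Complex.exp_ofReal_mul_I_re])
    _ = 0 := by rw [← Complex.re_sum, h]; rfl

lemma sum_neg_sin_zero (hN : 4 ≤ N) (hE : Even N) :
    ∑ ℓ ∈ Finset.Icc (1 : ℤ) (N : ℤ), (-1:ℝ)^ℓ * Real.sin (2*π*(N:ℝ)⁻¹*ℓ) = 0 := by
  have h := sum_zpow_zero N (by omega) _ (neg_w_ne_one N hN) (neg_w_pow_N N hN hE)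
  calc ∑ ℓ ∈ Finset.Icc (1 : ℤ) (N : ℤ), (-1:ℝ)^ℓ * Real.sin (2*π*(N:ℝ)⁻¹*ℓ)
      = ∑ ℓ ∈ Finset.Icc (1 : ℤ) (N : ℤ),
        ((-(Complex.exp ((2*π*(N:ℝ)⁻¹ : ℝ) * Complex.I))) ^ ℓ).im :=
        Finset.sum_congr rfl (fun ℓ _ => by
          rw [neg_w_zpow, w_pow, Complex.im_ofReal_mul, Complex.exp_ofReal_mul_I_im])
    _ = 0 := by rw [← Complex.im_sum, h]; rfl

end sums

/-! ### basic helpers -/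

lemma enorm2_sq_eq (v : ℝ × ℝ) : enorm2 v ^ 2 = edot v v := by
  rw [enorm2, Real.sq_sqrt (by positivity), edot]; ring

lemma enorm2_eq_sqrt (v : ℝ × ℝ) : enorm2 v = Real.sqrt (edot v v) := by
  rw [enorm2, edot]; congr 1; ring

lemma bd_add_smul (ε : ℝ) (y u : ℤ → ℝ × ℝ) (r : ℝ) (ℓ : ℤ) :
    bd ε (fun m => y m + r • u m) ℓ = bd ε y ℓ + r • bd ε u ℓ := by
  simp only [bd, smul_sub, smul_smul]
  module

lemma bd_smul (ε : ℝ) (u : ℤ → ℝ × ℝ) (C : ℝ) (ℓ : ℤ) :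
    bd ε (fun m => C • u m) ℓ = C • bd ε u ℓ := by
  simp only [bd, smul_sub, smul_smul]
  module

lemma edot_expand (v w : ℝ × ℝ) (r : ℝ) :
    edot (v + r • w) (v + r • w) = edot v v + 2 * r * edot v w + r ^ 2 * edot w w := by
  simp only [edot, Prod.fst_add, Prod.snd_add, Prod.smul_fst, Prod.smul_snd, smul_eq_mul]
  ring

lemma edot_smul_right (v w : ℝ × ℝ) (C : ℝ) : edot v (C • w) = C * edot v w := by
  simp only [edot, Prod.smul_fst, Prod.smul_snd, smul_eq_mul]; ring

lemma chord (A B : ℝ) : (Real.cos A - Real.cos B) ^ 2 + (Real.sin A - Real.sin B) ^ 2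
    = 2 - 2 * Real.cos (A - B) := by
  rw [Real.cos_sub]
  nlinarith [Real.sin_sq_add_cos_sq A, Real.sin_sq_add_cos_sq B]

section setup
variable {N : ℕ} {ε F : ℝ}

lemma eps_pos (hN : 4 ≤ N) (hε : ε = (N : ℝ)⁻¹) : 0 < ε := by
  subst hε
  have : (0:ℝ) < N := by exact_mod_cast (by omega : 0 < N)
  positivity

lemma eps_le (hN : 4 ≤ N) (hε : ε = (N : ℝ)⁻¹) : ε ≤ 4⁻¹ := by
  subst hε
  have h4 : (4:ℝ) ≤ N := by exact_mod_cast hN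
  rw [inv_le_inv₀ (by linarith) (by norm_num)]
  exact h4

lemma sin_pi_eps_pos (hN : 4 ≤ N) (hε : ε = (N : ℝ)⁻¹) : 0 < Real.sin (π * ε) := by
  have h0 := eps_pos hN hε
  have h1 := eps_le hN hε
  have hπ := Real.pi_pos
  apply Real.sin_pos_of_pos_of_lt_pi
  · positivity
  · nlinarith

lemma edot_yCirc_self (hN : 4 ≤ N) (hε : ε = (N : ℝ)⁻¹) (hF : 0 < F) (m : ℤ) :
    edot (yCirc ε F m) (yCirc ε F m) = (F * ε / (2 * Real.sin (π * ε))) ^ 2 := by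
  simp only [yCirc, edot]
  nlinarith [Real.sin_sq_add_cos_sq (2 * π * ε * m)]

lemma edot_aa (hN : 4 ≤ N) (hε : ε = (N : ℝ)⁻¹) (hF : 0 < F) (ℓ : ℤ) :
    edot (bd ε (yCirc ε F) ℓ) (bd ε (yCirc ε F) ℓ) = F ^ 2 := by
  have hs := sin_pi_eps_pos hN hε
  have h0 := eps_pos hN hε
  simp only [bd, yCirc, edot, Prod.smul_fst, Prod.smul_snd, Prod.fst_sub, Prod.snd_sub,
    smul_eq_mul]
  push_cast
  have key := chord (2 * π * ε * ℓ) (2 * π * ε * (ℓ - 1 : ℝ))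
  have hAB : 2 * π * ε * (ℓ:ℝ) - 2 * π * ε * ((ℓ:ℝ) - 1) = 2 * (π * ε) := by ring
  rw [hAB] at key
  have hcos : Real.cos (2 * (π * ε)) = 1 - 2 * Real.sin (π * ε) ^ 2 := by
    have := Real.cos_sq_add_sin_sq (π * ε)
    rw [Real.cos_two_mul]; nlinarith
  rw [hcos] at key
  have hne : Real.sin (π * ε) ≠ 0 := ne_of_gt hs
  have hεne : ε ≠ 0 := ne_of_gt h0
  linear_combination (norm := skip) (ε⁻¹ * (F * ε / (2 * Real.sin (π * ε)))) ^ 2 * key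
  generalize Real.sin (π * ε) = S at hne ⊢
  field_simp
  ring

end setup

/-! ### single-bond derivative lemmas -/

section bond
variable {φ : ℝ → ℝ}

lemma sqrt_poly_hasDeriv (F c d : ℝ) (r : ℝ) (hq : 0 < F ^ 2 + 2 * c * r + d * r ^ 2) :
    HasDerivAt (fun t => Real.sqrt (F ^ 2 + 2 * c * t + d * t ^ 2))
      ((c + d * r) / Real.sqrt (F ^ 2 + 2 * c * r + d * r ^ 2)) r := by
  have hpoly : HasDerivAt (fun t : ℝ => F ^ 2 + 2 * c * t + d * t ^ 2)
      (2 * c + 2 * d * r) r := by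
    have h1 := ((hasDerivAt_id r).const_mul (2 * c)).const_add (F ^ 2)
    have h2 := (hasDerivAt_pow 2 r).const_mul d
    have := h1.fun_add h2
    refine this.congr_deriv ?_
    push_cast; ring
  have := hpoly.sqrt (ne_of_gt hq)
  convert this using 1
  have hs : Real.sqrt (F ^ 2 + 2 * c * r + d * r ^ 2) ≠ 0 := by
    positivity
  field_simp

lemma bond_hasDeriv1
    (hφ1 : ∀ x : ℝ, 0 < x → HasDerivAt φ (deriv φ x) x)
    (F c d : ℝ) (r : ℝ) (hq : 0 < F ^ 2 + 2 * c * r + d * r ^ 2) :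
    HasDerivAt (fun t => φ (Real.sqrt (F ^ 2 + 2 * c * t + d * t ^ 2))
        + φ (2 * Real.sqrt (F ^ 2 + 2 * c * t + d * t ^ 2)))
      ((deriv φ (Real.sqrt (F ^ 2 + 2 * c * r + d * r ^ 2))
          + 2 * deriv φ (2 * Real.sqrt (F ^ 2 + 2 * c * r + d * r ^ 2))) *
        ((c + d * r) / Real.sqrt (F ^ 2 + 2 * c * r + d * r ^ 2))) r := by
  have hs := sqrt_poly_hasDeriv F c d r hq
  have hpos : 0 < Real.sqrt (F ^ 2 + 2 * c * r + d * r ^ 2) := Real.sqrt_pos.2 hq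
  have h1 : HasDerivAt (fun t => φ (Real.sqrt (F ^ 2 + 2 * c * t + d * t ^ 2)))
      (deriv φ (Real.sqrt (F ^ 2 + 2 * c * r + d * r ^ 2)) *
        ((c + d * r) / Real.sqrt (F ^ 2 + 2 * c * r + d * r ^ 2))) r := by
    simpa [Function.comp_def] using (hφ1 _ hpos).comp r hs
  have h2s : HasDerivAt (fun t => 2 * Real.sqrt (F ^ 2 + 2 * c * t + d * t ^ 2))
      (2 * ((c + d * r) / Real.sqrt (F ^ 2 + 2 * c * r + d * r ^ 2))) r := hs.const_mul 2
  have h2 : HasDerivAt (fun t => φ (2 * Real.sqrt (F ^ 2 + 2 * c * t + d * t ^ 2)))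
      (deriv φ (2 * Real.sqrt (F ^ 2 + 2 * c * r + d * r ^ 2)) *
        (2 * ((c + d * r) / Real.sqrt (F ^ 2 + 2 * c * r + d * r ^ 2)))) r := by
    simpa [Function.comp_def] using (hφ1 _ (by positivity)).comp r h2s
  refine (h1.fun_add h2).congr_deriv ?_
  ring

lemma bond_hasDeriv2
    (hφ2 : ∀ x : ℝ, 0 < x → HasDerivAt (deriv φ) (deriv (deriv φ) x) x)
    (F c d : ℝ) (hF : 0 < F) :
    HasDerivAt (fun t => (deriv φ (Real.sqrt (F ^ 2 + 2 * c * t + d * t ^ 2))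
        + 2 * deriv φ (2 * Real.sqrt (F ^ 2 + 2 * c * t + d * t ^ 2))) *
        ((c + d * t) / Real.sqrt (F ^ 2 + 2 * c * t + d * t ^ 2)))
      ((deriv (deriv φ) F + 4 * deriv (deriv φ) (2 * F)) * (c / F) ^ 2
        + (deriv φ F + 2 * deriv φ (2 * F)) / F * (d - (c / F) ^ 2)) 0 := by
  have hq0 : (0:ℝ) < F ^ 2 + 2 * c * 0 + d * 0 ^ 2 := by norm_num; positivity
  have hv : Real.sqrt (F ^ 2 + 2 * c * 0 + d * 0 ^ 2) = F := by
    norm_num; exact Real.sqrt_sq hF.le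
  have hs0 : HasDerivAt (fun t => Real.sqrt (F ^ 2 + 2 * c * t + d * t ^ 2)) (c / F) 0 := by
    have := sqrt_poly_hasDeriv F c d 0 hq0
    rw [hv] at this
    simpa using this
  have hg1 : HasDerivAt (deriv φ) (deriv (deriv φ) F)
      ((fun t => Real.sqrt (F ^ 2 + 2 * c * t + d * t ^ 2)) 0) := by
    simp only
    rw [hv]
    exact hφ2 F hF
  have hP1 : HasDerivAt (fun t => deriv φ (Real.sqrt (F ^ 2 + 2 * c * t + d * t ^ 2)))
      (deriv (deriv φ) F * (c / F)) 0 := by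
    simpa [Function.comp_def] using hg1.comp 0 hs0
  have h2s : HasDerivAt (fun t => 2 * Real.sqrt (F ^ 2 + 2 * c * t + d * t ^ 2))
      (2 * (c / F)) 0 := hs0.const_mul 2
  have hg2 : HasDerivAt (deriv φ) (deriv (deriv φ) (2 * F))
      ((fun t => 2 * Real.sqrt (F ^ 2 + 2 * c * t + d * t ^ 2)) 0) := by
    simp only
    rw [hv]
    exact hφ2 (2 * F) (by positivity)
  have hP2 : HasDerivAt (fun t => deriv φ (2 * Real.sqrt (F ^ 2 + 2 * c * t + d * t ^ 2)))
      (deriv (deriv φ) (2 * F) * (2 * (c / F))) 0 := by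
    simpa [Function.comp_def] using hg2.comp 0 h2s
  have hP : HasDerivAt (fun t => deriv φ (Real.sqrt (F ^ 2 + 2 * c * t + d * t ^ 2))
      + 2 * deriv φ (2 * Real.sqrt (F ^ 2 + 2 * c * t + d * t ^ 2)))
      (deriv (deriv φ) F * (c / F) + 2 * (deriv (deriv φ) (2 * F) * (2 * (c / F)))) 0 :=
    hP1.add (hP2.const_mul 2)
  have hnum : HasDerivAt (fun t : ℝ => c + d * t) d 0 := by
    simpa using ((hasDerivAt_id (0:ℝ)).const_mul d).const_add c
  have hden_ne : Real.sqrt (F ^ 2 + 2 * c * 0 + d * 0 ^ 2) ≠ 0 := by rw [hv]; exact hF.ne'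
  have hQ : HasDerivAt (fun t => (c + d * t) / Real.sqrt (F ^ 2 + 2 * c * t + d * t ^ 2))
      ((d * F - c * (c / F)) / F ^ 2) 0 := by
    have := hnum.fun_div hs0 hden_ne
    rw [hv] at this
    simpa using this
  have := hP.fun_mul hQ
  rw [hv] at this
  norm_num at this
  refine this.congr_deriv ?_
  field_simp
  ring

end bond

/-! ### derivatives of φ from C² -/

lemma phi_derivs {φ : ℝ → ℝ} (hφ : ContDiffOn ℝ 2 φ (Set.Ioi 0)) :
    (∀ x : ℝ, 0 < x → HasDerivAt φ (deriv φ x) x) ∧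
    (∀ x : ℝ, 0 < x → HasDerivAt (deriv φ) (deriv (deriv φ) x) x) := by
  have h2 : ContDiffOn ℝ ((1:ℕ) + 1) φ (Set.Ioi 0) := by exact_mod_cast hφ
  rw [contDiffOn_succ_iff_deriv_of_isOpen isOpen_Ioi] at h2
  constructor
  · intro x hx
    exact ((h2.1.differentiableAt (isOpen_Ioi.mem_nhds hx))).hasDerivAt
  · intro x hx
    exact ((h2.2.2.differentiableOn (by norm_num)).differentiableAt
      (isOpen_Ioi.mem_nhds hx)).hasDerivAt

/-! ### the second-variation formula -/

lemma d2E_formula {N : ℕ} {ε F : ℝ} {φ : ℝ → ℝ} (hN : 4 ≤ N) (hε : ε = (N : ℝ)⁻¹)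
    (hφ : ContDiffOn ℝ 2 φ (Set.Ioi 0)) (hF : 0 < F) (u : ℤ → ℝ × ℝ) :
    d2E (ECB N ε φ) (yCirc ε F) u u =
      ε * ∑ ℓ ∈ Finset.Icc (1 : ℤ) (N : ℤ),
        ((deriv (deriv φ) F + 4 * deriv (deriv φ) (2 * F)) *
            (edot (bd ε (yCirc ε F) ℓ) (bd ε u ℓ) / F) ^ 2
          + (deriv φ F + 2 * deriv φ (2 * F)) / F *
            (edot (bd ε u ℓ) (bd ε u ℓ) -
              (edot (bd ε (yCirc ε F) ℓ) (bd ε u ℓ) / F) ^ 2)) := by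
  obtain ⟨hφ1, hφ2⟩ := phi_derivs hφ
  have h0 := eps_pos hN hε
  set y := yCirc ε F with hy
  set c : ℤ → ℝ := fun ℓ => edot (bd ε y ℓ) (bd ε u ℓ) with hc
  set d : ℤ → ℝ := fun ℓ => edot (bd ε u ℓ) (bd ε u ℓ) with hd
  -- the one-parameter family reduces to an explicit function of r
  have hq : ∀ (r : ℝ) (ℓ : ℤ), edot (bd ε (fun m => y m + r • u m) ℓ)
      (bd ε (fun m => y m + r • u m) ℓ) = F ^ 2 + 2 * c ℓ * r + d ℓ * r ^ 2 := by
    intro r ℓ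
    rw [show bd ε (fun m => y m + r • u m) ℓ = bd ε y ℓ + r • bd ε u ℓ from
      bd_add_smul ε y u r ℓ, edot_expand, edot_aa hN hε hF]
    ring
  set G : ℝ → ℝ := fun r => ε * ∑ ℓ ∈ Finset.Icc (1:ℤ) (N:ℤ),
      (φ (Real.sqrt (F ^ 2 + 2 * c ℓ * r + d ℓ * r ^ 2))
        + φ (2 * Real.sqrt (F ^ 2 + 2 * c ℓ * r + d ℓ * r ^ 2))) with hG
  have hGE : ∀ r : ℝ, ECB N ε φ (fun m => y m + r • u m) = G r := by
    intro r
    rw [ECB, hG]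
    congr 1
    refine Finset.sum_congr rfl (fun ℓ _ => ?_)
    rw [enorm2_eq_sqrt, hq]
  set G1 : ℝ → ℝ := fun r => ε * ∑ ℓ ∈ Finset.Icc (1:ℤ) (N:ℤ),
      ((deriv φ (Real.sqrt (F ^ 2 + 2 * c ℓ * r + d ℓ * r ^ 2))
          + 2 * deriv φ (2 * Real.sqrt (F ^ 2 + 2 * c ℓ * r + d ℓ * r ^ 2))) *
        ((c ℓ + d ℓ * r) / Real.sqrt (F ^ 2 + 2 * c ℓ * r + d ℓ * r ^ 2))) with hG1
  -- G has derivative G1 wherever the quadratics are positive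
  have hGd : ∀ r : ℝ, (∀ ℓ ∈ Finset.Icc (1:ℤ) (N:ℤ), 0 < F ^ 2 + 2 * c ℓ * r + d ℓ * r ^ 2) →
      HasDerivAt G (G1 r) r := by
    intro r hr
    rw [hG, hG1]
    exact (HasDerivAt.fun_sum (fun ℓ hℓ => bond_hasDeriv1 hφ1 F (c ℓ) (d ℓ) r (hr ℓ hℓ))).const_mul ε
  -- positivity near 0
  have hev : ∀ᶠ r in nhds (0:ℝ), ∀ ℓ ∈ Finset.Icc (1:ℤ) (N:ℤ),
      0 < F ^ 2 + 2 * c ℓ * r + d ℓ * r ^ 2 := by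
    rw [Filter.eventually_all_finset]
    intro ℓ _
    have hcont : ContinuousAt (fun r : ℝ => F ^ 2 + 2 * c ℓ * r + d ℓ * r ^ 2) 0 := by
      fun_prop
    have h00 : (0:ℝ) < F ^ 2 + 2 * c ℓ * 0 + d ℓ * 0 ^ 2 := by norm_num; positivity
    exact hcont.eventually (eventually_gt_nhds h00)
  -- rewrite d2E as an iterated deriv of G
  have hinner : ∀ s : ℝ, (fun t : ℝ => ECB N ε φ (fun ℓ => y ℓ + t • u ℓ + s • u ℓ))
      = fun t : ℝ => G (t + s) := by
    intro s
    funext t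
    rw [← hGE (t + s)]
    congr 1
    funext m
    rw [add_smul]
    abel
  have houter : (fun s : ℝ => deriv (fun t : ℝ =>
      ECB N ε φ (fun ℓ => y ℓ + t • u ℓ + s • u ℓ)) 0) =ᶠ[nhds 0] G1 := by
    refine hev.mono (fun s hs => ?_)
    show deriv (fun t : ℝ => ECB N ε φ (fun ℓ => y ℓ + t • u ℓ + s • u ℓ)) 0 = G1 s
    rw [hinner s]
    have h1 : HasDerivAt G (G1 s) s := hGd s hs
    have h1' : HasDerivAt G (G1 s) (0 + s) := by rwa [zero_add]
    have h2 : HasDerivAt (fun t : ℝ => G (t + s)) (G1 s * 1) 0 :=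
      by have := h1'.comp 0 ((hasDerivAt_id (0:ℝ)).add_const s); exact this
    rw [mul_one] at h2
    exact h2.deriv
  have hd2 : d2E (ECB N ε φ) y u u = deriv G1 0 := by
    rw [d2E]
    exact houter.deriv_eq
  -- compute deriv G1 0
  have hG1d : HasDerivAt G1 (ε * ∑ ℓ ∈ Finset.Icc (1:ℤ) (N:ℤ),
      ((deriv (deriv φ) F + 4 * deriv (deriv φ) (2 * F)) * (c ℓ / F) ^ 2
        + (deriv φ F + 2 * deriv φ (2 * F)) / F * (d ℓ - (c ℓ / F) ^ 2))) 0 := by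
    rw [hG1]
    exact (HasDerivAt.fun_sum (fun ℓ _ => bond_hasDeriv2 hφ2 F (c ℓ) (d ℓ) hF)).const_mul ε
  rw [hd2, hG1d.deriv]

/-! ### norm and Cauchy-Schwarz -/

lemma nrm_sq {N : ℕ} {ε : ℝ} (hε0 : 0 ≤ ε) (v : ℤ → ℝ × ℝ) :
    nrm N ε v ^ 2 = ε * ∑ ℓ ∈ Finset.Icc (1:ℤ) (N:ℤ), edot (v ℓ) (v ℓ) := by
  rw [nrm, Real.sq_sqrt]
  · exact congrArg (ε * ·) (Finset.sum_congr rfl (fun ℓ _ => enorm2_sq_eq (v ℓ)))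
  · exact mul_nonneg hε0 (Finset.sum_nonneg (fun ℓ _ => sq_nonneg _))

lemma edot_sq_le (v w : ℝ × ℝ) : edot v w ^ 2 ≤ edot v v * edot w w := by
  simp only [edot]
  nlinarith [sq_nonneg (v.1 * w.2 - v.2 * w.1)]

lemma edot_self_nonneg (v : ℝ × ℝ) : 0 ≤ edot v v := by
  simp only [edot]; nlinarith

/-! ### special displacements -/

lemma zig_bd {ε F C : ℝ} (hε0 : ε ≠ 0) (ℓ : ℤ) :
    edot (bd ε (yCirc ε F) ℓ) (bd ε (fun m => ((-1:ℝ) ^ m * C) • yCirc ε F m) ℓ) = 0 := by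
  have hm1 : (-1:ℝ) ^ (ℓ - 1) = -(-1:ℝ) ^ ℓ := by
    rw [zpow_sub_one₀ (by norm_num : (-1:ℝ) ≠ 0)]
    norm_num
  have key : edot (bd ε (yCirc ε F) ℓ) (bd ε (fun m => ((-1:ℝ) ^ m * C) • yCirc ε F m) ℓ)
      = ε⁻¹ * ε⁻¹ * ((-1:ℝ) ^ ℓ * C) *
        (edot (yCirc ε F ℓ) (yCirc ε F ℓ) - edot (yCirc ε F (ℓ-1)) (yCirc ε F (ℓ-1))) := by
    simp only [bd, edot, Prod.smul_fst, Prod.smul_snd, Prod.fst_sub, Prod.snd_sub,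
      smul_eq_mul, hm1]
    ring
  rw [key, show edot (yCirc ε F ℓ) (yCirc ε F ℓ) = (F * ε / (2 * Real.sin (π * ε))) ^ 2 by
      simp only [yCirc, edot]; nlinarith [Real.sin_sq_add_cos_sq (2 * π * ε * ℓ)],
    show edot (yCirc ε F (ℓ-1)) (yCirc ε F (ℓ-1)) = (F * ε / (2 * Real.sin (π * ε))) ^ 2 by
      simp only [yCirc, edot]; nlinarith [Real.sin_sq_add_cos_sq (2 * π * ε * (ℓ-1 : ℤ))]]
  ring

section disp
variable {N : ℕ} {ε F : ℝ}

lemma epsN (hN : 4 ≤ N) (hε : ε = (N : ℝ)⁻¹) : ε * N = 1 := by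
  rw [hε]; field_simp

lemma yCirc_periodic (hN : 4 ≤ N) (hε : ε = (N : ℝ)⁻¹) (ℓ : ℤ) :
    yCirc ε F (ℓ + (N:ℤ)) = yCirc ε F ℓ := by
  have hεN := epsN hN hε
  have harg : 2 * π * ε * (((ℓ + (N:ℤ)) : ℤ) : ℝ) = 2 * π * ε * (ℓ:ℝ) + 2 * π := by
    push_cast
    linear_combination 2 * π * hεN
  simp only [yCirc, harg, Real.cos_add_two_pi, Real.sin_add_two_pi]

lemma yCirc_sum_zero (hN : 4 ≤ N) (hε : ε = (N : ℝ)⁻¹) :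
    ∑ ℓ ∈ Finset.Icc (1:ℤ) (N:ℤ), yCirc ε F ℓ = 0 := by
  subst hε
  apply Prod.ext
  · rw [Prod.fst_sum]
    simp only [yCirc]
    rw [← Finset.mul_sum, sum_cos_zero N hN, mul_zero]
    rfl
  · rw [Prod.snd_sum]
    simp only [yCirc]
    rw [← Finset.mul_sum, sum_sin_zero N hN, mul_zero]
    rfl

lemma yCirc_zig_sum_zero (hN : 4 ≤ N) (hε : ε = (N : ℝ)⁻¹) (hE : Even N) (C : ℝ) :
    ∑ ℓ ∈ Finset.Icc (1:ℤ) (N:ℤ), ((-1:ℝ) ^ ℓ * C) • yCirc (N:ℝ)⁻¹ F ℓ = 0 := by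
  apply Prod.ext
  · rw [Prod.fst_sum]
    simp only [yCirc, Prod.smul_fst, smul_eq_mul]
    have : ∀ ℓ : ℤ, (-1:ℝ) ^ ℓ * C * (F * (N:ℝ)⁻¹ / (2 * Real.sin (π * (N:ℝ)⁻¹)) *
        Real.cos (2 * π * (N:ℝ)⁻¹ * ℓ)) =
        C * (F * (N:ℝ)⁻¹ / (2 * Real.sin (π * (N:ℝ)⁻¹))) *
          ((-1:ℝ) ^ ℓ * Real.cos (2 * π * (N:ℝ)⁻¹ * ℓ)) := by intro ℓ; ring
    rw [Finset.sum_congr rfl (fun ℓ _ => this ℓ), ← Finset.mul_sum,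
      sum_neg_cos_zero N hN hE, mul_zero]
    rfl
  · rw [Prod.snd_sum]
    simp only [yCirc, Prod.smul_snd, smul_eq_mul]
    have : ∀ ℓ : ℤ, (-1:ℝ) ^ ℓ * C * (F * (N:ℝ)⁻¹ / (2 * Real.sin (π * (N:ℝ)⁻¹)) *
        Real.sin (2 * π * (N:ℝ)⁻¹ * ℓ)) =
        C * (F * (N:ℝ)⁻¹ / (2 * Real.sin (π * (N:ℝ)⁻¹))) *
          ((-1:ℝ) ^ ℓ * Real.sin (2 * π * (N:ℝ)⁻¹ * ℓ)) := by intro ℓ; ring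
    rw [Finset.sum_congr rfl (fun ℓ _ => this ℓ), ← Finset.mul_sum,
      sum_neg_sin_zero N hN hE, mul_zero]
    rfl

end disp

lemma edot_comm (v w : ℝ × ℝ) : edot v w = edot w v := by simp only [edot]; ring

lemma edot_smul_left (v w : ℝ × ℝ) (C : ℝ) : edot (C • v) w = C * edot v w := by
  simp only [edot, Prod.smul_fst, Prod.smul_snd, smul_eq_mul]; ring

theorem stmt_4 (N : ℕ) (hN : 4 ≤ N) (ε : ℝ) (hε : ε = (N : ℝ)⁻¹)
    (φ : ℝ → ℝ) (hφ : ContDiffOn ℝ 2 φ (Set.Ioi 0)) (F : ℝ) (hF : 0 < F) :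
    (∀ u : ℤ → ℝ × ℝ, IsDisp N u →
      d2E (ECB N ε φ) (yCirc ε F) u u ≥
        min (deriv (deriv φ) F + 4 * deriv (deriv φ) (2 * F))
            ((deriv φ F + 2 * deriv φ (2 * F)) / F) * (nrm N ε (bd ε u)) ^ 2) ∧
    (∀ C : ℝ, 0 < C →
      IsDisp N (fun ℓ : ℤ => C • yCirc ε F ℓ) ∧
      d2E (ECB N ε φ) (yCirc ε F)
          (fun ℓ : ℤ => C • yCirc ε F ℓ) (fun ℓ : ℤ => C • yCirc ε F ℓ) =
        (deriv (deriv φ) F + 4 * deriv (deriv φ) (2 * F)) *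
          (nrm N ε (bd ε (fun ℓ : ℤ => C • yCirc ε F ℓ))) ^ 2) ∧
    (Even N → ∀ C : ℝ, 0 < C →
      IsDisp N (fun ℓ : ℤ => ((-1 : ℝ) ^ ℓ * C) • yCirc ε F ℓ) ∧
      d2E (ECB N ε φ) (yCirc ε F)
          (fun ℓ : ℤ => ((-1 : ℝ) ^ ℓ * C) • yCirc ε F ℓ)
          (fun ℓ : ℤ => ((-1 : ℝ) ^ ℓ * C) • yCirc ε F ℓ) =
        ((deriv φ F + 2 * deriv φ (2 * F)) / F) *
          (nrm N ε (bd ε (fun ℓ : ℤ => ((-1 : ℝ) ^ ℓ * C) • yCirc ε F ℓ))) ^ 2) := by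
  have hε0 : 0 < ε := eps_pos hN hε
  set A := deriv (deriv φ) F + 4 * deriv (deriv φ) (2 * F) with hA
  set B := (deriv φ F + 2 * deriv φ (2 * F)) / F with hB
  have hFne : F ≠ 0 := hF.ne'
  refine ⟨?_, ?_, ?_⟩
  -- Part 1: lower bound
  · intro u _
    rw [ge_iff_le, d2E_formula hN hε hφ hF u, nrm_sq hε0.le]
    have hstep : min A B * (ε * ∑ ℓ ∈ Finset.Icc (1:ℤ) (N:ℤ), edot (bd ε u ℓ) (bd ε u ℓ))
        = ε * ∑ ℓ ∈ Finset.Icc (1:ℤ) (N:ℤ), min A B * edot (bd ε u ℓ) (bd ε u ℓ) := by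
      rw [show min A B * (ε * ∑ ℓ ∈ Finset.Icc (1:ℤ) (N:ℤ), edot (bd ε u ℓ) (bd ε u ℓ))
        = ε * (min A B * ∑ ℓ ∈ Finset.Icc (1:ℤ) (N:ℤ), edot (bd ε u ℓ) (bd ε u ℓ)) from by
          ring, Finset.mul_sum]
    rw [hstep]
    apply mul_le_mul_of_nonneg_left _ hε0.le
    apply Finset.sum_le_sum
    intro ℓ _
    set a := bd ε (yCirc ε F) ℓ
    set b := bd ε u ℓ
    have hcs := edot_sq_le a b
    rw [edot_aa hN hε hF] at hcs
    have hd0 := edot_self_nonneg b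
    have hp2 : (edot a b / F) ^ 2 ≤ edot b b := by
      rw [div_pow, div_le_iff₀ (by positivity)]
      nlinarith
    have hp0 : 0 ≤ (edot a b / F) ^ 2 := sq_nonneg _
    rcases le_total A B with h | h
    · rw [min_eq_left h]; nlinarith
    · rw [min_eq_right h]; nlinarith
  -- Part 2: radial expansion
  · intro C hC
    constructor
    · constructor
      · intro ℓ
        simp only
        rw [yCirc_periodic hN hε]
      · simp only
        rw [← Finset.smul_sum, yCirc_sum_zero hN hε, smul_zero]
    · rw [d2E_formula hN hε hφ hF, nrm_sq hε0.le]
      have hterm : ∀ ℓ ∈ Finset.Icc (1:ℤ) (N:ℤ),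
          A * (edot (bd ε (yCirc ε F) ℓ) (bd ε (fun m : ℤ => C • yCirc ε F m) ℓ) / F) ^ 2
            + B * (edot (bd ε (fun m : ℤ => C • yCirc ε F m) ℓ)
                (bd ε (fun m : ℤ => C • yCirc ε F m) ℓ)
              - (edot (bd ε (yCirc ε F) ℓ) (bd ε (fun m : ℤ => C • yCirc ε F m) ℓ) / F) ^ 2)
          = A * edot (bd ε (fun m : ℤ => C • yCirc ε F m) ℓ)
              (bd ε (fun m : ℤ => C • yCirc ε F m) ℓ) := by
        intro ℓ _
        rw [bd_smul, edot_smul_right, edot_smul_left, edot_smul_right,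
          edot_aa hN hε hF]
        field_simp
        ring
      rw [Finset.sum_congr rfl hterm, ← Finset.mul_sum]
      ring
  -- Part 3: zig-zag
  · intro hE C hC
    constructor
    · constructor
      · intro ℓ
        simp only
        rw [yCirc_periodic hN hε, zpow_add₀ (by norm_num : (-1:ℝ) ≠ 0), zpow_natCast,
          hE.neg_one_pow, mul_one]
      · have := yCirc_zig_sum_zero (F := F) hN hε hE C
        rw [← hε] at this
        exact this
    · rw [d2E_formula hN hε hφ hF, nrm_sq hε0.le]
      have hterm : ∀ ℓ ∈ Finset.Icc (1:ℤ) (N:ℤ),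
          A * (edot (bd ε (yCirc ε F) ℓ)
                (bd ε (fun m : ℤ => ((-1:ℝ) ^ m * C) • yCirc ε F m) ℓ) / F) ^ 2
            + B * (edot (bd ε (fun m : ℤ => ((-1:ℝ) ^ m * C) • yCirc ε F m) ℓ)
                (bd ε (fun m : ℤ => ((-1:ℝ) ^ m * C) • yCirc ε F m) ℓ)
              - (edot (bd ε (yCirc ε F) ℓ)
                (bd ε (fun m : ℤ => ((-1:ℝ) ^ m * C) • yCirc ε F m) ℓ) / F) ^ 2)
          = B * edot (bd ε (fun m : ℤ => ((-1:ℝ) ^ m * C) • yCirc ε F m) ℓ)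
              (bd ε (fun m : ℤ => ((-1:ℝ) ^ m * C) • yCirc ε F m) ℓ) := by
        intro ℓ _
        rw [zig_bd hε0.ne']
        norm_num
      rw [Finset.sum_congr rfl hterm, ← Finset.mul_sum]
      ring
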